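/- If K_g is a positive semidefinite symmetric kernel on X, then the tensor product pairwise kernel K_TPPK((x₁,x₂),(x₃,x₄)) = K_g(x₁,x₃)K_g(x₂,x₄) + K_g(x₁,x₄)K_g(x₂,x₃) is a positive semidefinite kernel on X × X. -/

import Mathlib

open Matrix

open scoped MatrixOrder

section Aux

variable {X : Type*} {Kg : X → X → ℝ}

/-- hpsd generalized to arbitrary finite index types. -/
lemma psd_fintype
    (hpsd : ∀ (n : ℕ) (s : Fin n → X) (c : Fin n → ℝ),
      0 ≤ ∑ i, ∑ j, c i * c j * Kg (s i) (s j))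
    {ι : Type*} [Fintype ι] (s : ι → X) (c : ι → ℝ) :
    0 ≤ ∑ i, ∑ j, c i * c j * Kg (s i) (s j) := by
  classical
  obtain ⟨e⟩ := Fintype.truncEquivFin ι
  have := hpsd (Fintype.card ι) (s ∘ e.symm) (c ∘ e.symm)
  calc (0:ℝ) ≤ ∑ i, ∑ j, (c ∘ e.symm) i * (c ∘ e.symm) j * Kg ((s ∘ e.symm) i) ((s ∘ e.symm) j) := this
    _ = ∑ i, ∑ j, c i * c j * Kg (s i) (s j) := by
        rw [← Equiv.sum_comp e.symm (fun i => ∑ j, c i * c j * Kg (s i) (s j))]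
        refine Finset.sum_congr rfl fun i _ => ?_
        rw [← Equiv.sum_comp e.symm (fun j => c (e.symm i) * c j * Kg (s (e.symm i)) (s j))]
        simp [Function.comp]

/-- product kernel is PSD. -/
lemma prod_psd (hsymm : ∀ x y, Kg x y = Kg y x)
    (hpsd : ∀ (n : ℕ) (s : Fin n → X) (c : Fin n → ℝ),
      0 ≤ ∑ i, ∑ j, c i * c j * Kg (s i) (s j))
    {ι : Type*} [Fintype ι] (s : ι → X × X) (c : ι → ℝ) :
    0 ≤ ∑ i, ∑ j, c i * c j * (Kg (s i).1 (s j).1 * Kg (s i).2 (s j).2) := by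
  classical
  set A : Matrix ι ι ℝ := Matrix.of fun i j => Kg (s i).2 (s j).2 with hAdef
  have hA : A.PosSemidef := by
    refine Matrix.PosSemidef.of_dotProduct_mulVec_nonneg ?_ ?_
    · ext i j
      simp [A, hsymm (s j).2 (s i).2, Matrix.conjTranspose_apply]
    · intro x
      have := psd_fintype hpsd (fun i => (s i).2) x
      calc (0:ℝ) ≤ ∑ i, ∑ j, x i * x j * Kg (s i).2 (s j).2 := this
        _ = dotProduct (star x) (A *ᵥ x) := by
            simp only [dotProduct, Matrix.mulVec, dotProduct, Pi.star_apply, star_trivial,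
              Finset.mul_sum]
            refine Finset.sum_congr rfl fun i _ => Finset.sum_congr rfl fun j _ => ?_
            simp [A]; ring
  set B := CFC.sqrt A with hBdef
  have hBB : B * B = A := CFC.sqrt_mul_sqrt_self A hA.nonneg
  have hBsymm : ∀ i j, B i j = B j i := by
    intro i j
    have h := (CFC.sqrt_nonneg A).posSemidef.1
    have := congrFun (congrFun h i) j
    simpa [Matrix.conjTranspose_apply] using this.symm
  have hAij : ∀ i j, Kg (s i).2 (s j).2 = ∑ k, B i k * B j k := by
    intro i j
    have : A i j = (B * B) i j := by rw [hBB]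
    simpa [A, Matrix.mul_apply, fun k => hBsymm k j] using this
  calc (0:ℝ) ≤ ∑ k : ι, ∑ i, ∑ j, (c i * B i k) * (c j * B j k) * Kg (s i).1 (s j).1 := by
        exact Finset.sum_nonneg fun k _ =>
          psd_fintype hpsd (fun i => (s i).1) (fun i => c i * B i k)
    _ = ∑ i, ∑ j, c i * c j * (Kg (s i).1 (s j).1 * Kg (s i).2 (s j).2) := by
        rw [Finset.sum_comm]
        refine Finset.sum_congr rfl fun i _ => ?_
        rw [Finset.sum_comm]
        refine Finset.sum_congr rfl fun j _ => ?_
        rw [hAij i j, Finset.mul_sum, Finset.mul_sum]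
        exact Finset.sum_congr rfl fun k _ => by ring

end Aux

theorem stmt_10 (X : Type*) (Kg : X → X → ℝ) (hsymm : ∀ x y, Kg x y = Kg y x)
    (hpsd : ∀ (n : ℕ) (s : Fin n → X) (c : Fin n → ℝ),
      0 ≤ ∑ i, ∑ j, c i * c j * Kg (s i) (s j))
    (n : ℕ) (s : Fin n → X × X) (c : Fin n → ℝ) :
    0 ≤ ∑ i, ∑ j, c i * c j *
      (Kg (s i).1 (s j).1 * Kg (s i).2 (s j).2 + Kg (s i).1 (s j).2 * Kg (s i).2 (s j).1) := by
  classical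
  set t : Fin n ⊕ Fin n → X × X := Sum.elim s (fun i => ((s i).2, (s i).1)) with ht
  set d : Fin n ⊕ Fin n → ℝ := Sum.elim c c with hd
  have key := prod_psd hsymm hpsd t d
  have hexp : ∑ i, ∑ j, d i * d j * (Kg (t i).1 (t j).1 * Kg (t i).2 (t j).2)
      = 2 * ∑ i, ∑ j, c i * c j *
        (Kg (s i).1 (s j).1 * Kg (s i).2 (s j).2 + Kg (s i).1 (s j).2 * Kg (s i).2 (s j).1) := by
    rw [Fintype.sum_sum_type]
    simp only [Fintype.sum_sum_type, ht, hd, Sum.elim_inl, Sum.elim_inr]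
    rw [← Finset.sum_add_distrib, Finset.mul_sum]
    refine Finset.sum_congr rfl fun i _ => ?_
    rw [← Finset.sum_add_distrib, ← Finset.sum_add_distrib, ← Finset.sum_add_distrib,
      Finset.mul_sum]
    refine Finset.sum_congr rfl fun j _ => ?_
    rw [hsymm (s i).2 (s j).2, hsymm (s i).2 (s j).1, hsymm (s i).1 (s j).2,
      hsymm (s i).1 (s j).1]
    ring
  linarith [key, hexp ▸ key]
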